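/- For any finitely generated abelian group M, the smallest cardinality of a generating set of M equals the maximum over all primes p of dim_{𝔽ₚ}(M ⊗_ℤ 𝔽ₚ) (this maximum being 0 when M is trivial). -/

import Mathlib

open TensorProduct DirectSum

lemma aux_span_top (M : Type*) [AddCommGroup M] (q : ℕ) (S : Finset M)
    (hS : AddSubgroup.closure (S : Set M) = ⊤) :
    Submodule.span (ZMod q) ((fun m => (1 : ZMod q) ⊗ₜ[ℤ] m) '' (S : Set M)) = ⊤ := by
  set W := Submodule.span (ZMod q) ((fun m => (1 : ZMod q) ⊗ₜ[ℤ] m) '' (S : Set M))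
  have key : ∀ m : M, (1 : ZMod q) ⊗ₜ[ℤ] m ∈ W := by
    intro m
    let T : AddSubgroup M :=
      { carrier := {m | (1 : ZMod q) ⊗ₜ[ℤ] m ∈ W}
        zero_mem' := by simp [TensorProduct.tmul_zero]
        add_mem' := fun {a b} ha hb => by
          simpa [TensorProduct.tmul_add] using W.add_mem ha hb
        neg_mem' := fun {a} ha => by
          simpa [TensorProduct.tmul_neg] using W.neg_mem ha }
    have : AddSubgroup.closure (S : Set M) ≤ T := (AddSubgroup.closure_le T).mpr
      (fun s hs => Submodule.subset_span ⟨s, hs, rfl⟩)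
    rw [hS] at this
    exact this trivial
  rw [eq_top_iff]
  rintro x -
  induction x using TensorProduct.induction_on with
  | zero => exact W.zero_mem
  | tmul z m =>
      have : z ⊗ₜ[ℤ] m = z • ((1 : ZMod q) ⊗ₜ[ℤ] m) := by
        rw [TensorProduct.smul_tmul', smul_eq_mul, mul_one]
      rw [this]
      exact W.smul_mem z (key m)
  | add x y hx hy => exact W.add_mem hx hy

lemma aux_le (M : Type*) [AddCommGroup M] (q : ℕ) [Fact q.Prime] (S : Finset M)
    (hS : AddSubgroup.closure (S : Set M) = ⊤) :
    Module.finrank (ZMod q) (ZMod q ⊗[ℤ] M) ≤ S.card := by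
  classical
  have h := aux_span_top M q S hS
  have : ((S.image (fun m => (1 : ZMod q) ⊗ₜ[ℤ] m)) : Set (ZMod q ⊗[ℤ] M))
      = (fun m => (1 : ZMod q) ⊗ₜ[ℤ] m) '' (S : Set M) := by
    simp [Finset.coe_image]
  calc Module.finrank (ZMod q) (ZMod q ⊗[ℤ] M)
      = Module.finrank (ZMod q)
        (Submodule.span (ZMod q) ((S.image (fun m => (1 : ZMod q) ⊗ₜ[ℤ] m)) : Set (ZMod q ⊗[ℤ] M))) := by
        rw [this, h, finrank_top]
    _ ≤ (S.image (fun m => (1 : ZMod q) ⊗ₜ[ℤ] m)).card := by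
        simpa [Set.finrank] using finrank_span_finset_le_card (R := ZMod q) (S.image (fun m => (1 : ZMod q) ⊗ₜ[ℤ] m))
    _ ≤ S.card := Finset.card_image_le

lemma aux_lb (M : Type*) [AddCommGroup M] [Module.Finite ℤ M] (q : ℕ) [Fact q.Prime]
    (V : Type*) [AddCommGroup V] [Module (ZMod q) V]
    (f : M →+ V) (hf : Function.Surjective f) :
    Module.finrank (ZMod q) V ≤ Module.finrank (ZMod q) (ZMod q ⊗[ℤ] M) := by
  let φ : ZMod q →ₗ[ZMod q] (M →ₗ[ℤ] V) :=
    LinearMap.toSpanSingleton (ZMod q) (M →ₗ[ℤ] V) f.toIntLinearMap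
  let g : ZMod q ⊗[ℤ] M →ₗ[ZMod q] V := TensorProduct.AlgebraTensorModule.lift φ
  have hg : Function.Surjective g := by
    intro v
    obtain ⟨m, rfl⟩ := hf v
    exact ⟨(1 : ZMod q) ⊗ₜ[ℤ] m, by simp [g, φ]⟩
  have : LinearMap.range g = ⊤ := LinearMap.range_eq_top.mpr hg
  calc Module.finrank (ZMod q) V = Module.finrank (ZMod q) (LinearMap.range g) := by
        rw [this, finrank_top]
    _ ≤ Module.finrank (ZMod q) (ZMod q ⊗[ℤ] M) := LinearMap.finrank_range_le g

section
variable {ι : Type} [Fintype ι] (p e : ι → ℕ)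

lemma aux_key (hp : ∀ i, (p i).Prime) :
    ∃ (m : ℕ) (S₂ : Finset (⨁ i, ZMod (p i ^ e i))) (q : ℕ), q.Prime ∧ S₂.card ≤ m ∧
      AddSubgroup.closure (S₂ : Set (⨁ i, ZMod (p i ^ e i))) = ⊤ ∧
      m ≤ Fintype.card {i // p i = q ∧ e i ≠ 0} := by
  classical
  set G := ⨁ i, ZMod (p i ^ e i) with hG
  let ord := Fintype.equivFin ι
  let t : ι → ℕ := fun i =>
    (Finset.univ.filter fun j => p j = p i ∧ e j ≠ 0 ∧ ord j < ord i).card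
  set m : ℕ := Finset.univ.sup (fun i => if e i ≠ 0 then t i + 1 else 0) with hm_def
  -- injectivity of `p` on each level set of `t`
  have hmono : ∀ i j : ι, e i ≠ 0 → p i = p j → ord i < ord j → t i < t j := by
    intro i j hei hpij hij
    apply Finset.card_lt_card
    constructor
    · intro k hk
      simp only [Finset.mem_filter, Finset.mem_univ, true_and] at hk ⊢
      exact ⟨hk.1.trans hpij, hk.2.1, hk.2.2.trans hij⟩
    · intro hsub
      have hmem : i ∈ Finset.univ.filter fun k => p k = p j ∧ e k ≠ 0 ∧ ord k < ord j := by
        simp only [Finset.mem_filter, Finset.mem_univ, true_and]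
        exact ⟨hpij, hei, hij⟩
      have h2 := (Finset.mem_filter.mp (hsub hmem)).2
      exact absurd h2.2.2 (lt_irrefl _)
  have hinj : ∀ i j : ι, e i ≠ 0 → e j ≠ 0 → t i = t j → p i = p j → i = j := by
    intro i j hei hej ht hpij
    rcases lt_trichotomy (ord i) (ord j) with h | h | h
    · exact absurd ht (hmono i j hei hpij h).ne
    · exact ord.injective h
    · exact absurd ht.symm (hmono j i hej hpij.symm h).ne
  have ht_lt : ∀ i, e i ≠ 0 → t i < m := by
    intro i hei
    have h : (if e i ≠ 0 then t i + 1 else 0) ≤ m :=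
      Finset.le_sup (f := fun i => if e i ≠ 0 then t i + 1 else 0) (Finset.mem_univ i)
    rw [if_pos hei] at h
    omega
  let A : ℕ → Finset ι := fun s => Finset.univ.filter fun i => e i ≠ 0 ∧ t i = s
  let g : ℕ → G := fun s => ∑ i ∈ A s, DirectSum.of (fun i => ZMod (p i ^ e i)) i 1
  let S₂ : Finset G := (Finset.range m).image g
  have hof : ∀ i, e i ≠ 0 →
      DirectSum.of (fun i => ZMod (p i ^ e i)) i 1 ∈ AddSubgroup.closure (S₂ : Set G) := by
    intro i hei
    set H := AddSubgroup.closure (S₂ : Set G)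
    have hg_mem : g (t i) ∈ H := AddSubgroup.subset_closure
      (Finset.mem_coe.mpr (Finset.mem_image.mpr ⟨t i, Finset.mem_range.mpr (ht_lt i hei), rfl⟩))
    have hiA : i ∈ A (t i) := Finset.mem_filter.mpr ⟨Finset.mem_univ _, hei, rfl⟩
    set N : ℕ := ∏ j ∈ (A (t i)).erase i, p j ^ e j with hN
    have hNsm : N • g (t i) = DirectSum.of (fun i => ZMod (p i ^ e i)) i (N : ZMod (p i ^ e i)) := by
      rw [Finset.smul_sum]
      rw [Finset.sum_eq_single_of_mem i hiA]
      · rw [← map_nsmul]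
        congr 1
        rw [nsmul_eq_mul, mul_one]
      · intro j hjA hji
        have hdvd : (p j ^ e j : ℕ) ∣ N :=
          Finset.dvd_prod_of_mem _ (Finset.mem_erase.mpr ⟨hji, hjA⟩)
        rw [← map_nsmul]
        have : (N • (1 : ZMod (p j ^ e j))) = 0 := by
          rw [nsmul_eq_mul, mul_one, ZMod.natCast_eq_zero_iff]
          exact hdvd
        rw [this, map_zero]
    have hcop : N.Coprime (p i ^ e i) := by
      apply Nat.Coprime.prod_left
      intro j hj
      rw [Finset.mem_erase] at hj
      have hji : j ≠ i := hj.1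
      have hjA' := (Finset.mem_filter.mp hj.2).2
      have hpji : p j ≠ p i := fun hpe => hji (hinj j i hjA'.1 hei hjA'.2 hpe)
      exact Nat.Coprime.pow _ _ ((Nat.coprime_primes (hp j) (hp i)).mpr hpji)
    have : NeZero (p i ^ e i) := ⟨pow_ne_zero _ (hp i).ne_zero⟩
    have hunit : IsUnit (N : ZMod (p i ^ e i)) := (ZMod.isUnit_iff_coprime N _).mpr hcop
    obtain ⟨u, hu⟩ := hunit
    have : ((↑u⁻¹ : ZMod (p i ^ e i)).val) • (N • g (t i))
        = DirectSum.of (fun i => ZMod (p i ^ e i)) i 1 := by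
      rw [hNsm, ← map_nsmul]
      congr 1
      rw [nsmul_eq_mul, ZMod.natCast_val, ZMod.cast_id, ← hu, ← Units.val_mul, inv_mul_cancel,
        Units.val_one]
    rw [← this]
    exact AddSubgroup.nsmul_mem H (AddSubgroup.nsmul_mem H hg_mem N) _
  have hclosure : AddSubgroup.closure (S₂ : Set G) = ⊤ := by
    rw [eq_top_iff]
    intro x hx
    clear hx
    induction x using DirectSum.induction_on with
    | zero => exact AddSubgroup.zero_mem _
    | of i b =>
        by_cases hei : e i = 0
        · have : Subsingleton (ZMod (p i ^ e i)) := by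
            rw [hei, pow_zero]; infer_instance
          have : b = 0 := Subsingleton.elim b 0
          rw [this, map_zero]; exact AddSubgroup.zero_mem _
        · have : NeZero (p i ^ e i) := ⟨pow_ne_zero _ (hp i).ne_zero⟩
          have hb : b = b.val • (1 : ZMod (p i ^ e i)) := by
            rw [nsmul_eq_mul, mul_one, ZMod.natCast_val, ZMod.cast_id]
          rw [hb, map_nsmul]
          exact AddSubgroup.nsmul_mem _ (hof i hei) _
    | add x y hx hy => exact AddSubgroup.add_mem _ hx hy
  -- choose the prime
  by_cases hm : m = 0
  · exact ⟨m, S₂, 2, Nat.prime_two, Finset.card_image_le.trans (by simp), hclosure,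
      by omega⟩
  · have hne : (Finset.univ : Finset ι).Nonempty := by
      by_contra h
      rw [Finset.not_nonempty_iff_eq_empty] at h
      exact hm (by rw [hm_def, h]; simp)
    obtain ⟨i₀, -, hi₀⟩ := Finset.exists_mem_eq_sup Finset.univ hne
      (fun i => if e i ≠ 0 then t i + 1 else 0)
    have hi₀' : m = if e i₀ ≠ 0 then t i₀ + 1 else 0 := hm_def.trans hi₀
    have hei₀ : e i₀ ≠ 0 := by
      by_contra h
      rw [if_neg (by simp [h])] at hi₀'
      exact hm hi₀'
    have hmt : m = t i₀ + 1 := by rw [hi₀', if_pos hei₀]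
    refine ⟨m, S₂, p i₀, hp i₀, Finset.card_image_le.trans (by simp), hclosure, ?_⟩
    rw [Fintype.card_subtype, hmt]
    have hsub : insert i₀ (Finset.univ.filter fun j => p j = p i₀ ∧ e j ≠ 0 ∧ ord j < ord i₀)
        ⊆ Finset.univ.filter fun j => p j = p i₀ ∧ e j ≠ 0 := by
      intro k hk
      rw [Finset.mem_insert] at hk
      rcases hk with rfl | hk
      · simp [hei₀]
      · simp only [Finset.mem_filter, Finset.mem_univ, true_and] at hk ⊢
        exact ⟨hk.1, hk.2.1⟩
    have hcard := Finset.card_le_card hsub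
    rw [Finset.card_insert_of_notMem (by simp)] at hcard
    exact hcard

end

section
variable {ι : Type} [Fintype ι] (p e : ι → ℕ)

lemma aux_surj (hp : ∀ i, (p i).Prime) (q : ℕ) (hq : q.Prime) :
    ∃ F : (⨁ i, ZMod (p i ^ e i)) →+ ({i // p i = q ∧ e i ≠ 0} →₀ ZMod q),
      Function.Surjective F := by
  classical
  have : NeZero q := ⟨hq.ne_zero⟩
  let φ : ∀ i, ZMod (p i ^ e i) →+ ({i // p i = q ∧ e i ≠ 0} →₀ ZMod q) := fun i =>
    if h : p i = q ∧ e i ≠ 0 then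
      (Finsupp.singleAddHom (⟨i, h⟩ : {i // p i = q ∧ e i ≠ 0})).comp
        ((ZMod.castHom (show q ∣ p i ^ e i by
          rw [h.1]; exact dvd_pow_self q h.2) (ZMod q)).toAddMonoidHom)
    else 0
  refine ⟨DirectSum.toAddMonoid φ, ?_⟩
  intro v
  induction v using Finsupp.induction with
  | zero => exact ⟨0, map_zero _⟩
  | single_add b c f hbf hc ih =>
      obtain ⟨x, hx⟩ := ih
      obtain ⟨i, hi⟩ := b
      refine ⟨DirectSum.of (fun i => ZMod (p i ^ e i)) i ((c.val : ZMod (p i ^ e i))) + x, ?_⟩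
      rw [map_add, hx, DirectSum.toAddMonoid_of]
      congr 1
      simp only [φ, dif_pos hi, AddMonoidHom.comp_apply, RingHom.toAddMonoidHom_eq_coe,
        RingHom.coe_coe, Finsupp.singleAddHom_apply]
      congr 1
      show ZMod.castHom (show q ∣ p i ^ e i by
        rw [hi.1]; exact dvd_pow_self q hi.2) (ZMod q) ((c.val : ZMod (p i ^ e i))) = c
      rw [map_natCast]
      exact ZMod.natCast_rightInverse c

lemma aux_free_gen (r : ℕ) :
    AddSubgroup.closure ((Finset.univ.image (fun s : Fin r => Finsupp.single s (1 : ℤ)) : Finset (Fin r →₀ ℤ)) : Set (Fin r →₀ ℤ)) = ⊤ := by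
  classical
  rw [eq_top_iff]
  intro x hx
  clear hx
  induction x using Finsupp.induction with
  | zero => exact AddSubgroup.zero_mem _
  | single_add a b f hbf hb ih =>
      refine AddSubgroup.add_mem _ ?_ ih
      have : Finsupp.single a b = b • Finsupp.single a (1 : ℤ) := by
        rw [Finsupp.smul_single, smul_eq_mul, mul_one]
      rw [this]
      exact AddSubgroup.zsmul_mem _ (AddSubgroup.subset_closure (by simp)) b
end

/-- For a finitely generated abelian group `M`, the smallest cardinality of a
generating set of `M` equals the maximum over all primes `p` of
`dim_{𝔽ₚ} (M ⊗_ℤ 𝔽ₚ)` (the maximum being `0` when `M` is trivial). -/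
theorem stmt_13 (M : Type*) [AddCommGroup M] (hfg : AddGroup.FG M) :
    sInf {n : ℕ | ∃ S : Finset M, S.card = n ∧ AddSubgroup.closure (S : Set M) = ⊤}
      = sSup {d : ℕ | ∃ p : ℕ, p.Prime ∧
          d = Module.finrank (ZMod p) (ZMod p ⊗[ℤ] M)} := by
  classical
  set A := {n : ℕ | ∃ S : Finset M, S.card = n ∧ AddSubgroup.closure (S : Set M) = ⊤} with hA
  set B := {d : ℕ | ∃ p : ℕ, p.Prime ∧ d = Module.finrank (ZMod p) (ZMod p ⊗[ℤ] M)} with hB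
  haveI hMfin : Module.Finite ℤ M := Module.Finite.iff_addGroup_fg.mpr hfg
  obtain ⟨S₀, hS₀⟩ := hfg.out
  have hAne : A.Nonempty := ⟨S₀.card, S₀, rfl, hS₀⟩
  have hBle : ∀ d ∈ B, ∀ n ∈ A, d ≤ n := by
    rintro d ⟨q, hq, rfl⟩ n ⟨S, rfl, hScl⟩
    haveI := Fact.mk hq
    exact aux_le M q S hScl
  have hBbdd : BddAbove B := ⟨S₀.card, fun d hd => hBle d hd S₀.card ⟨S₀, rfl, hS₀⟩⟩
  have hBne : B.Nonempty := ⟨_, 2, Nat.prime_two, rfl⟩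
  refine le_antisymm ?_ (csSup_le hBne fun d hd => ?_)
  · -- sInf A ≤ sSup B
    obtain ⟨r, ι, fι, p, hpp, e, ⟨f⟩⟩ := AddCommGroup.equiv_free_prod_directSum_zmod M
    obtain ⟨m, S₂, q, hq, hS₂card, hS₂cl, hmcard⟩ := aux_key p e hpp
    haveI := Fact.mk hq
    set P := ((Fin r →₀ ℤ) × ⨁ i : ι, ZMod (p i ^ e i)) with hP
    set S₁ : Finset (Fin r →₀ ℤ) := Finset.univ.image (fun s : Fin r => Finsupp.single s (1 : ℤ))
      with hS₁
    set S : Finset P := (S₁.image (fun a => ((a, 0) : P))) ∪ (S₂.image (fun b => ((0, b) : P)))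
      with hS
    have hScl : AddSubgroup.closure (S : Set P) = ⊤ := by
      rw [eq_top_iff]
      rintro ⟨x1, x2⟩ _
      have h1 : ((x1, 0) : P) ∈ AddSubgroup.closure (S : Set P) := by
        have hmap : AddSubgroup.closure ((fun a => ((a, 0) : P)) '' (S₁ : Set (Fin r →₀ ℤ)))
            ≤ AddSubgroup.closure (S : Set P) := by
          apply AddSubgroup.closure_mono
          rintro z ⟨a, ha, rfl⟩
          exact Finset.mem_coe.mpr
            (Finset.mem_union_left _ (Finset.mem_image_of_mem _ (Finset.mem_coe.mp ha)))
        apply hmap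
        rw [show (fun a => ((a, 0) : P)) = (AddMonoidHom.inl (Fin r →₀ ℤ) _ : _ →+ P) from rfl,
          ← AddMonoidHom.map_closure, aux_free_gen r]
        exact ⟨x1, trivial, rfl⟩
      have h2 : ((0, x2) : P) ∈ AddSubgroup.closure (S : Set P) := by
        have hmap : AddSubgroup.closure ((fun b => ((0, b) : P)) '' (S₂ : Set _))
            ≤ AddSubgroup.closure (S : Set P) := by
          apply AddSubgroup.closure_mono
          rintro z ⟨b, hb, rfl⟩
          exact Finset.mem_coe.mpr
            (Finset.mem_union_right _ (Finset.mem_image_of_mem _ (Finset.mem_coe.mp hb)))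
        apply hmap
        rw [show (fun b => ((0, b) : P)) = (AddMonoidHom.inr (Fin r →₀ ℤ) _ : _ →+ P) from rfl,
          ← AddMonoidHom.map_closure, hS₂cl]
        exact ⟨x2, trivial, rfl⟩
      have : ((x1, x2) : P) = (x1, 0) + (0, x2) := by simp
      rw [this]
      exact AddSubgroup.add_mem _ h1 h2
    set T : Finset M := S.image (fun x => f.symm x) with hT
    have hTcl : AddSubgroup.closure (T : Set M) = ⊤ := by
      rw [hT, Finset.coe_image]
      have himg : ((fun x => f.symm x) '' (S : Set P))
          = ⇑f.symm.toAddMonoidHom '' (S : Set P) := rfl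
      rw [himg, ← AddMonoidHom.map_closure f.symm.toAddMonoidHom, hScl]
      rw [eq_top_iff]
      intro y _
      exact ⟨f y, trivial, f.symm_apply_apply y⟩
    have hTA : T.card ∈ A := ⟨T, rfl, hTcl⟩
    have hTle : T.card ≤ r + m := by
      calc T.card ≤ S.card := Finset.card_image_le
        _ ≤ (S₁.image (fun a => ((a, 0) : P))).card + (S₂.image (fun b => ((0, b) : P))).card :=
            Finset.card_union_le _ _
        _ ≤ S₁.card + S₂.card := add_le_add Finset.card_image_le Finset.card_image_le
        _ ≤ r + m := add_le_add (Finset.card_image_le.trans (by simp)) hS₂card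
    -- lower bound for the rank at q
    obtain ⟨F, hF⟩ := aux_surj p e hpp q hq
    have hneq : NeZero q := ⟨hq.ne_zero⟩
    let F1 : (Fin r →₀ ℤ) →+ (Fin r →₀ ZMod q) :=
      Finsupp.mapRange.addMonoidHom (Int.castAddHom (ZMod q))
    have hF1 : Function.Surjective F1 :=
      Finsupp.mapRange_surjective _ (map_zero _) ZMod.intCast_surjective
    let F2 : M →+ ((Fin r →₀ ZMod q) × ({i // p i = q ∧ e i ≠ 0} →₀ ZMod q)) :=
      (AddMonoidHom.prodMap F1 F) |>.comp f.toAddMonoidHom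
    have hF2 : Function.Surjective F2 :=
      (Function.Surjective.prodMap hF1 hF).comp f.surjective
    have hfr : Module.finrank (ZMod q)
          ((Fin r →₀ ZMod q) × ({i // p i = q ∧ e i ≠ 0} →₀ ZMod q))
        = r + Fintype.card {i // p i = q ∧ e i ≠ 0} := by
      rw [Module.finrank_prod, Module.finrank_finsupp_self, Module.finrank_finsupp_self,
        Fintype.card_fin]
    have hlb : r + m ≤ Module.finrank (ZMod q) (ZMod q ⊗[ℤ] M) := by
      have := aux_lb M q _ F2 hF2
      rw [hfr] at this
      omega
    have hdB : Module.finrank (ZMod q) (ZMod q ⊗[ℤ] M) ∈ B := ⟨q, hq, rfl⟩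
    calc sInf A ≤ T.card := Nat.sInf_le hTA
      _ ≤ r + m := hTle
      _ ≤ Module.finrank (ZMod q) (ZMod q ⊗[ℤ] M) := hlb
      _ ≤ sSup B := le_csSup hBbdd hdB
  · -- d ≤ sInf A
    have hsInf : sInf A ∈ A := Nat.sInf_mem hAne
    exact hBle d hd _ hsInf
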